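/- Let (V, B) be a KS set from an orthogonal representation of J(N,2) in dimension N−1 (N odd, N ≥ 5), with bases b₁,...,b_N. Then for any four distinct indices i,j,k,ℓ, the pair (S_A, S_B) with S_A = B \ {b_i, b_j} and S_B = B \ {b_k, b_ℓ} is a bipartite KS set: no classical assignment exists for (S_A, S_B). -/

import Mathlib

/-- `p` is a point on line `i` of the `J(N,2)`-configuration. -/
def PointOn (N i : ℕ) (p : Finset ℕ) : Prop :=
  ∃ j ∈ Finset.Icc 1 N, j ≠ i ∧ p = {i, j}

/-- A classical assignment for the pair of sets of lines (bases) `(SA, SB)`. -/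
def HasClassicalAssignment (N : ℕ) (SA SB : Finset ℕ) : Prop :=
  ∃ F G : ℕ → Finset ℕ,
    (∀ i ∈ SA, PointOn N i (F i)) ∧
    (∀ k ∈ SB, PointOn N k (G k)) ∧
    (∀ i ∈ SA, ∀ k ∈ SB, F i = G k ∨ Disjoint (F i) (G k))

lemma PointOn.mem_self {N i : ℕ} {p : Finset ℕ} (h : PointOn N i p) : i ∈ p := by
  obtain ⟨j, _, _, rfl⟩ := h
  simp

lemma PointOn.card_two {N i : ℕ} {p : Finset ℕ} (h : PointOn N i p) : p.card = 2 := by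
  obtain ⟨j, _, hji, rfl⟩ := h
  exact Finset.card_pair (Ne.symm hji)

lemma PointOn.subset_Icc {N i : ℕ} {p : Finset ℕ} (hi : i ∈ Finset.Icc 1 N)
    (h : PointOn N i p) : p ⊆ Finset.Icc 1 N := by
  obtain ⟨j, hj, _, rfl⟩ := h
  intro x hx
  rcases Finset.mem_insert.1 hx with rfl | hx
  · exact hi
  · rw [Finset.mem_singleton] at hx; exact hx ▸ hj

/-- Key lemma: two points `p, q` on distinct lines `k, l`, which are each
equal-or-disjoint to a point on every other line, are themselves equal or disjoint. -/
lemma pair_ok {N k l : ℕ} (hkl : k ≠ l) (hk : k ∈ Finset.Icc 1 N)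
    (hl : l ∈ Finset.Icc 1 N) {p q : Finset ℕ} (hp : PointOn N k p)
    (hq : PointOn N l q) (G : ℕ → Finset ℕ)
    (hG : ∀ m ∈ Finset.Icc 1 N \ {k, l}, PointOn N m (G m))
    (hpG : ∀ m ∈ Finset.Icc 1 N \ {k, l}, p = G m ∨ Disjoint p (G m))
    (hqG : ∀ m ∈ Finset.Icc 1 N \ {k, l}, q = G m ∨ Disjoint q (G m)) :
    p = q ∨ Disjoint p q := by
  by_cases hd : Disjoint p q
  · exact Or.inr hd
  left
  obtain ⟨m, hmp, hmq⟩ := Finset.not_disjoint_iff.1 hd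
  obtain ⟨a, ha, hak, hpa⟩ := hp
  obtain ⟨b, hb, hbl, hqb⟩ := hq
  subst hpa; subst hqb
  rcases Finset.mem_insert.1 hmp with h1 | h1
  · -- m = k
    rcases Finset.mem_insert.1 hmq with h2 | h2
    · exact absurd (h1.symm.trans h2) hkl
    · rw [Finset.mem_singleton] at h2
      have hbk : b = k := h2.symm.trans h1
      -- q = {l, k}
      by_cases hal : a = l
      · rw [hal, hbk, Finset.pair_comm]
      · have haS : a ∈ Finset.Icc 1 N \ ({k, l} : Finset ℕ) := by
          rw [Finset.mem_sdiff]
          refine ⟨ha, ?_⟩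
          simp only [Finset.mem_insert, Finset.mem_singleton]
          push_neg
          exact ⟨hak, hal⟩
        have haGa : a ∈ G a := (hG a haS).mem_self
        have hpGa : ({k, a} : Finset ℕ) = G a := by
          rcases hpG a haS with h | h
          · exact h
          · exact absurd h (Finset.not_disjoint_iff.2 ⟨a, by simp, haGa⟩)
        rcases hqG a haS with h | h
        · exact hpGa.trans h.symm
        · rw [← hpGa] at h
          exact absurd h (Finset.not_disjoint_iff.2 ⟨k, by rw [hbk]; simp, by simp⟩)
  · rw [Finset.mem_singleton] at h1
    rcases Finset.mem_insert.1 hmq with h2 | h2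
    · -- a = l : p = {k, l}
      have hal : a = l := h1.symm.trans h2
      by_cases hbk : b = k
      · rw [hal, hbk, Finset.pair_comm]
      · have hbS : b ∈ Finset.Icc 1 N \ ({k, l} : Finset ℕ) := by
          rw [Finset.mem_sdiff]
          refine ⟨hb, ?_⟩
          simp only [Finset.mem_insert, Finset.mem_singleton]
          push_neg
          exact ⟨hbk, hbl⟩
        have hbGb : b ∈ G b := (hG b hbS).mem_self
        have hqGb : ({l, b} : Finset ℕ) = G b := by
          rcases hqG b hbS with h | h
          · exact h
          · exact absurd h (Finset.not_disjoint_iff.2 ⟨b, by simp, hbGb⟩)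
        rcases hpG b hbS with h | h
        · exact h.trans hqGb.symm
        · rw [← hqGb] at h
          exact absurd h (Finset.not_disjoint_iff.2 ⟨l, by rw [hal]; simp, by simp⟩)
    · rw [Finset.mem_singleton] at h2
      have hab : a = b := h1.symm.trans h2
      -- common neighbor a = b
      have hmS : a ∈ Finset.Icc 1 N \ ({k, l} : Finset ℕ) := by
        rw [Finset.mem_sdiff]
        refine ⟨ha, ?_⟩
        simp only [Finset.mem_insert, Finset.mem_singleton]
        push_neg
        exact ⟨hak, hab ▸ hbl⟩
      have haGa : a ∈ G a := (hG a hmS).mem_self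
      have e1 : ({k, a} : Finset ℕ) = G a := by
        rcases hpG a hmS with h | h
        · exact h
        · exact absurd h (Finset.not_disjoint_iff.2 ⟨a, by simp, haGa⟩)
      have e2 : ({l, b} : Finset ℕ) = G a := by
        rcases hqG a hmS with h | h
        · exact h
        · exact absurd h (Finset.not_disjoint_iff.2 ⟨b, by simp, hab ▸ haGa⟩)
      exact e1.trans e2.symm

/-- Parity argument: a full assignment on `Icc 1 N` with pairwise
equal-or-disjoint points forces `N` to be even. -/
lemma even_of_full_assignment {N : ℕ} (H : ℕ → Finset ℕ)
    (hH : ∀ a ∈ Finset.Icc 1 N, PointOn N a (H a))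
    (hpair : ∀ a ∈ Finset.Icc 1 N, ∀ b ∈ Finset.Icc 1 N,
      H a = H b ∨ Disjoint (H a) (H b)) : Even N := by
  classical
  set E := (Finset.Icc 1 N).image H with hE
  have hunion : E.biUnion id = Finset.Icc 1 N := by
    apply Finset.Subset.antisymm
    · intro x hx
      obtain ⟨e, he, hxe⟩ := Finset.mem_biUnion.1 hx
      obtain ⟨a, ha, rfl⟩ := Finset.mem_image.1 he
      exact (hH a ha).subset_Icc ha hxe
    · intro x hx
      exact Finset.mem_biUnion.2 ⟨H x, Finset.mem_image_of_mem H hx, (hH x hx).mem_self⟩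
  have hdisj : ∀ e ∈ E, ∀ e' ∈ E, e ≠ e' → Disjoint (id e) (id e') := by
    intro e he e' he' hne
    obtain ⟨a, ha, rfl⟩ := Finset.mem_image.1 he
    obtain ⟨b, hb, rfl⟩ := Finset.mem_image.1 he'
    rcases hpair a ha b hb with h | h
    · exact absurd h hne
    · exact h
  have hcard : (E.biUnion id).card = ∑ e ∈ E, (id e).card := Finset.card_biUnion hdisj
  have hsum : ∑ e ∈ E, (id e).card = 2 * E.card := by
    rw [Finset.sum_congr rfl (fun e he => ?_), Finset.sum_const, smul_eq_mul, mul_comm]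
    obtain ⟨a, ha, rfl⟩ := Finset.mem_image.1 he
    exact (hH a ha).card_two
  have hN : (Finset.Icc 1 N).card = N := by
    rw [Nat.card_Icc]; omega
  rw [hunion, hN, hsum] at hcard
  exact ⟨E.card, by omega⟩

/-- For `N` odd, `N ≥ 5`, and any four distinct indices `i, j, k, l` of bases,
the pair `(B \ {bᵢ, bⱼ}, B \ {bₖ, bₗ})` is a bipartite KS set: it admits no
classical assignment. -/
theorem bipartite_KS_of_four_distinct (N : ℕ) (hN : Odd N) (hN5 : 5 ≤ N)
    (i j k l : ℕ) (hi : i ∈ Finset.Icc 1 N) (hj : j ∈ Finset.Icc 1 N)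
    (hk : k ∈ Finset.Icc 1 N) (hl : l ∈ Finset.Icc 1 N)
    (hdist : ({i, j, k, l} : Finset ℕ).card = 4) :
    ¬ HasClassicalAssignment N (Finset.Icc 1 N \ {i, j})
      (Finset.Icc 1 N \ {k, l}) := by
  classical
  -- pairwise distinctness
  have key : ∀ (a b c : ℕ) (s : Finset ℕ), s ⊆ {a, b, c} → s.card ≠ 4 := by
    intro a b c s hs h
    have h1 := Finset.card_le_card hs
    have h2 := Finset.card_insert_le a ({b, c} : Finset ℕ)
    have h3 := Finset.card_insert_le b ({c} : Finset ℕ)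
    have h4 : ({c} : Finset ℕ).card = 1 := Finset.card_singleton c
    omega
  have hij : i ≠ j := by
    rintro rfl; exact key i k l _ (by intro x hx; simp at hx ⊢; tauto) hdist
  have hik : i ≠ k := by
    rintro rfl; exact key i j l _ (by intro x hx; simp at hx ⊢; tauto) hdist
  have hil : i ≠ l := by
    rintro rfl; exact key i j k _ (by intro x hx; simp at hx ⊢; tauto) hdist
  have hjk : j ≠ k := by
    rintro rfl; exact key i j l _ (by intro x hx; simp at hx ⊢; tauto) hdist
  have hjl : j ≠ l := by
    rintro rfl; exact key i j k _ (by intro x hx; simp at hx ⊢; tauto) hdist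
  have hkl : k ≠ l := by
    rintro rfl; exact key i j k _ (by intro x hx; simp at hx ⊢; tauto) hdist
  rintro ⟨F, G, hF, hG, hFG⟩
  set SA := Finset.Icc 1 N \ ({i, j} : Finset ℕ) with hSAdef
  set SB := Finset.Icc 1 N \ ({k, l} : Finset ℕ) with hSBdef
  have memSA : ∀ a, a ∈ Finset.Icc 1 N → a ≠ i → a ≠ j → a ∈ SA := by
    intro a ha h1 h2
    rw [hSAdef, Finset.mem_sdiff]
    exact ⟨ha, by simp [h1, h2]⟩
  have memSB : ∀ a, a ∈ Finset.Icc 1 N → a ≠ k → a ≠ l → a ∈ SB := by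
    intro a ha h1 h2
    rw [hSBdef, Finset.mem_sdiff]
    exact ⟨ha, by simp [h1, h2]⟩
  have hkSA : k ∈ SA := memSA k hk (Ne.symm hik) (Ne.symm hjk)
  have hlSA : l ∈ SA := memSA l hl (Ne.symm hil) (Ne.symm hjl)
  have hiSB : i ∈ SB := memSB i hi hik hil
  have hjSB : j ∈ SB := memSB j hj hjk hjl
  -- F = G on the intersection
  have hFGeq : ∀ a, a ∈ SA → a ∈ SB → F a = G a := by
    intro a haA haB
    rcases hFG a haA a haB with h | h
    · exact h
    · exact absurd h (Finset.not_disjoint_iff.2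
        ⟨a, (hF a haA).mem_self, (hG a haB).mem_self⟩)
  -- F k and F l are equal or disjoint
  have hFkl : F k = F l ∨ Disjoint (F k) (F l) :=
    pair_ok hkl hk hl (hF k hkSA) (hF l hlSA) G hG
      (fun m hm => hFG k hkSA m hm) (fun m hm => hFG l hlSA m hm)
  -- G i and G j are equal or disjoint
  have hGij : G i = G j ∨ Disjoint (G i) (G j) :=
    pair_ok hij hi hj (hG i hiSB) (hG j hjSB) F hF
      (fun m hm => (hFG m hm i hiSB).imp (fun e => e.symm) (fun d => d.symm))
      (fun m hm => (hFG m hm j hjSB).imp (fun e => e.symm) (fun d => d.symm))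
  -- the full assignment
  set H : ℕ → Finset ℕ := fun a => if a = i ∨ a = j then G a else F a with hHdef
  have hHval_ij : ∀ a, (a = i ∨ a = j) → H a = G a := by
    intro a h; simp [hHdef, h]
  have hHval : ∀ a, a ≠ i → a ≠ j → H a = F a := by
    intro a h1 h2; simp [hHdef, h1, h2]
  have hH : ∀ a ∈ Finset.Icc 1 N, PointOn N a (H a) := by
    intro a ha
    by_cases h : a = i ∨ a = j
    · rw [hHval_ij a h]
      rcases h with rfl | rfl
      · exact hG a hiSB
      · exact hG a hjSB
    · push_neg at h
      rw [hHval a h.1 h.2]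
      exact hF a (memSA a ha h.1 h.2)
  have hpair : ∀ a ∈ Finset.Icc 1 N, ∀ b ∈ Finset.Icc 1 N,
      H a = H b ∨ Disjoint (H a) (H b) := by
    intro a ha b hb
    by_cases hA : a = i ∨ a = j
    · rw [hHval_ij a hA]
      by_cases hB : b = i ∨ b = j
      · rw [hHval_ij b hB]
        rcases hA with rfl | rfl <;> rcases hB with rfl | rfl
        · exact Or.inl rfl
        · exact hGij
        · exact hGij.imp (fun e => e.symm) (fun d => d.symm)
        · exact Or.inl rfl
      · push_neg at hB
        rw [hHval b hB.1 hB.2]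
        have hbA : b ∈ SA := memSA b hb hB.1 hB.2
        have haB : a ∈ SB := by
          rcases hA with rfl | rfl
          · exact hiSB
          · exact hjSB
        exact (hFG b hbA a haB).imp (fun e => e.symm) (fun d => d.symm)
    · push_neg at hA
      rw [hHval a hA.1 hA.2]
      have haA : a ∈ SA := memSA a ha hA.1 hA.2
      by_cases hB : b = i ∨ b = j
      · rw [hHval_ij b hB]
        have hbB : b ∈ SB := by
          rcases hB with rfl | rfl
          · exact hiSB
          · exact hjSB
        exact hFG a haA b hbB
      · push_neg at hB
        rw [hHval b hB.1 hB.2]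
        have hbA : b ∈ SA := memSA b hb hB.1 hB.2
        by_cases hbkl : b = k ∨ b = l
        · by_cases hakl : a = k ∨ a = l
          · rcases hakl with rfl | rfl <;> rcases hbkl with rfl | rfl
            · exact Or.inl rfl
            · exact hFkl
            · exact hFkl.imp (fun e => e.symm) (fun d => d.symm)
            · exact Or.inl rfl
          · push_neg at hakl
            have haB : a ∈ SB := memSB a ha hakl.1 hakl.2
            have h := hFG b hbA a haB
            rw [← hFGeq a haA haB] at h
            exact h.imp (fun e => e.symm) (fun d => d.symm)
        · push_neg at hbkl
          have hbB : b ∈ SB := memSB b hb hbkl.1 hbkl.2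
          have h := hFG a haA b hbB
          rw [← hFGeq b hbA hbB] at h
          exact h
  exact (Nat.not_even_iff_odd.2 hN) (even_of_full_assignment H hH hpair)
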